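/- arXiv:1109.0227 — 4 statements merged into one kernel-verified Lean document; each statement's English description precedes it below -/
import Mathlib

section
/- For any nonnegative integer p, ∑_{x=0}^{p+1} (p-2x+1)^2 / (x!·(x+2)!·(p-x+3)!·(p-x+1)!) = 2·C(2p+4, p) / ((p+2)!·(p+3)!). -/
open Finset

private lemma vand (a b k : ℕ) :
    ∑ x ∈ Finset.range (k + 1), a.choose x * b.choose (k - x) = (a + b).choose k := by
  rw [Nat.add_choose_eq, Finset.Nat.sum_antidiagonal_eq_sum_range_succ_mk]

private lemma sumL1 (p : ℕ) :
    ∑ x ∈ Finset.range (p + 2), Nat.choose (p + 2) x * Nat.choose (p + 2) (x + 2)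
      = Nat.choose (2 * p + 4) p := by
  rw [Finset.sum_range_succ]
  have hz : Nat.choose (p + 2) (p + 1 + 2) = 0 := Nat.choose_eq_zero_of_lt (by omega)
  rw [hz, Nat.mul_zero, Nat.add_zero]
  have h : ∀ x ∈ Finset.range (p + 1),
      Nat.choose (p + 2) x * Nat.choose (p + 2) (x + 2)
        = Nat.choose (p + 2) x * Nat.choose (p + 2) (p - x) := by
    intro x hx
    simp only [Finset.mem_range] at hx
    congr 1
    rw [← Nat.choose_symm (by omega : x + 2 ≤ p + 2)]
    congr 1
    omega
  rw [Finset.sum_congr rfl h, show 2 * p + 4 = (p + 2) + (p + 2) from by ring]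
  exact vand (p + 2) (p + 2) p

private lemma sumL2 (p : ℕ) :
    ∑ x ∈ Finset.range (p + 2), Nat.choose (p + 2) x * Nat.choose (p + 2) (x + 1)
      = Nat.choose (2 * p + 4) (p + 1) := by
  have h : ∀ x ∈ Finset.range (p + 2),
      Nat.choose (p + 2) x * Nat.choose (p + 2) (x + 1)
        = Nat.choose (p + 2) x * Nat.choose (p + 2) (p + 1 - x) := by
    intro x hx
    simp only [Finset.mem_range] at hx
    congr 1
    rw [← Nat.choose_symm (by omega : x + 1 ≤ p + 2)]
    congr 1
    omega
  rw [Finset.sum_congr rfl h, show 2 * p + 4 = (p + 2) + (p + 2) from by ring]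
  exact vand (p + 2) (p + 2) (p + 1)

private lemma sumL3 (p : ℕ) :
    ∑ x ∈ Finset.range (p + 2), Nat.choose (p + 2) x * Nat.choose (p + 3) (x + 2)
      = Nat.choose (2 * p + 5) (p + 1) := by
  have h : ∀ x ∈ Finset.range (p + 2),
      Nat.choose (p + 2) x * Nat.choose (p + 3) (x + 2)
        = Nat.choose (p + 2) x * Nat.choose (p + 3) (p + 1 - x) := by
    intro x hx
    simp only [Finset.mem_range] at hx
    congr 1
    rw [← Nat.choose_symm (by omega : x + 2 ≤ p + 3)]
    congr 1
    omega
  rw [Finset.sum_congr rfl h, show 2 * p + 5 = (p + 2) + (p + 3) from by ring]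
  exact vand (p + 2) (p + 3) (p + 1)

private lemma sumL4 (p : ℕ) :
    ∑ x ∈ Finset.range (p + 2), Nat.choose (p + 3) x * Nat.choose (p + 2) (x + 1)
      = Nat.choose (2 * p + 5) (p + 1) := by
  have h : ∀ x ∈ Finset.range (p + 2),
      Nat.choose (p + 3) x * Nat.choose (p + 2) (x + 1)
        = Nat.choose (p + 3) x * Nat.choose (p + 2) (p + 1 - x) := by
    intro x hx
    simp only [Finset.mem_range] at hx
    congr 1
    rw [← Nat.choose_symm (by omega : x + 1 ≤ p + 2)]
    congr 1
    omega
  rw [Finset.sum_congr rfl h, show 2 * p + 5 = (p + 3) + (p + 2) from by ring]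
  exact vand (p + 3) (p + 2) (p + 1)

private lemma idI (a x : ℕ) :
    ((a : ℚ) + 1 - x) * (Nat.choose (a + 1) x : ℚ) = ((a : ℚ) + 1) * (Nat.choose a x : ℚ) := by
  rcases le_or_gt x (a + 1) with h | h
  · have h2 := Nat.choose_mul_succ_eq a x
    have hc : ((a + 1 - x : ℕ) : ℚ) = (a : ℚ) + 1 - x := by
      push_cast [Nat.cast_sub h]
      ring
    have h3 : (Nat.choose a x : ℚ) * ((a : ℚ) + 1)
        = (Nat.choose (a + 1) x : ℚ) * ((a : ℚ) + 1 - x) := by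
      rw [← hc]
      exact_mod_cast congrArg (Nat.cast : ℕ → ℚ) h2
    linarith [h3]
  · rw [Nat.choose_eq_zero_of_lt h, Nat.choose_eq_zero_of_lt (by omega)]
    simp

private lemma idII (a x : ℕ) :
    ((x : ℚ) + 1) * (Nat.choose (a + 1) (x + 1) : ℚ)
      = ((a : ℚ) + 1) * (Nat.choose a x : ℚ) := by
  have h := Nat.add_one_mul_choose_eq a x
  have h' : ((a + 1) * Nat.choose a x : ℕ) = (Nat.choose (a + 1) (x + 1) * (x + 1) : ℕ) := by
    simpa [Nat.succ_eq_add_one] using h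
  have := congrArg (Nat.cast : ℕ → ℚ) h'
  push_cast at this
  linarith [this]

private lemma decomp (n x : ℕ) :
    ((n : ℚ) - 2 * x - 1) ^ 2 * (Nat.choose (n + 1) x : ℚ) * (Nat.choose (n + 1) (x + 2) : ℚ)
      = ((n : ℚ) + 1) ^ 2 * (Nat.choose n x : ℚ) * (Nat.choose n (x + 2) : ℚ)
        - 3 * ((n : ℚ) + 1) ^ 2 * (Nat.choose n x : ℚ) * (Nat.choose n (x + 1) : ℚ)
        + 2 * ((n : ℚ) + 1) * (Nat.choose n x : ℚ) * (Nat.choose (n + 1) (x + 2) : ℚ)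
        + ((n : ℚ) + 1) * ((n : ℚ) + 3) * (Nat.choose (n + 1) x : ℚ)
            * (Nat.choose n (x + 1) : ℚ) := by
  have h1 := idI n x
  have h2 := idI n (x + 2)
  have h3 := idII n (x + 1)
  push_cast at h1 h2 h3
  linear_combination
    (((n : ℚ) - 2 * x - 1) * (Nat.choose (n + 1) (x + 2) : ℚ)
        - 2 * ((n : ℚ) + 1) * (Nat.choose n (x + 1) : ℚ)) * h1
      + ((n : ℚ) + 1) * (Nat.choose n x : ℚ) * h2
      + (-(((n : ℚ) - 2 * x - 1)) * (Nat.choose (n + 1) x : ℚ)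
          - ((n : ℚ) + 1) * (Nat.choose n x : ℚ)) * h3

theorem partition_sum_eval (p : ℕ) :
    ∑ x ∈ Finset.range (p + 2),
        ((p : ℚ) - 2 * (x : ℚ) + 1) ^ 2 /
          ((Nat.factorial x : ℚ) * (Nat.factorial (x + 2)) *
            (Nat.factorial (p + 3 - x)) * (Nat.factorial (p + 1 - x))) =
      2 * (Nat.choose (2 * p + 4) p : ℚ) /
        ((Nat.factorial (p + 2) : ℚ) * (Nat.factorial (p + 3))) := by
  have fact_ne : ∀ k : ℕ, (Nat.factorial k : ℚ) ≠ 0 := fun k =>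
    Nat.cast_ne_zero.2 (Nat.factorial_ne_zero k)
  -- Step 1: rewrite each term with binomial coefficients
  have key : ∀ x ∈ Finset.range (p + 2),
      ((p : ℚ) - 2 * (x : ℚ) + 1) ^ 2 /
          ((Nat.factorial x : ℚ) * (Nat.factorial (x + 2)) *
            (Nat.factorial (p + 3 - x)) * (Nat.factorial (p + 1 - x)))
        = ((p : ℚ) - 2 * (x : ℚ) + 1) ^ 2 * (Nat.choose (p + 3) x : ℚ)
              * (Nat.choose (p + 3) (x + 2) : ℚ) /
            ((Nat.factorial (p + 3) : ℚ) * (Nat.factorial (p + 3) : ℚ)) := by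
    intro x hx
    simp only [Finset.mem_range] at hx
    have e1n := Nat.choose_mul_factorial_mul_factorial (by omega : x ≤ p + 3)
    have e2n := Nat.choose_mul_factorial_mul_factorial (by omega : x + 2 ≤ p + 3)
    have hsub : p + 3 - (x + 2) = p + 1 - x := by omega
    rw [hsub] at e2n
    have e1 := congrArg (Nat.cast : ℕ → ℚ) e1n
    have e2 := congrArg (Nat.cast : ℕ → ℚ) e2n
    push_cast at e1 e2
    have hD : (Nat.factorial x : ℚ) * (Nat.factorial (x + 2)) *
        (Nat.factorial (p + 3 - x)) * (Nat.factorial (p + 1 - x)) ≠ 0 := by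
      exact mul_ne_zero (mul_ne_zero (mul_ne_zero (fact_ne _) (fact_ne _)) (fact_ne _)) (fact_ne _)
    have hF : (Nat.factorial (p + 3) : ℚ) * (Nat.factorial (p + 3) : ℚ) ≠ 0 :=
      mul_ne_zero (fact_ne _) (fact_ne _)
    rw [div_eq_div_iff hD hF]
    linear_combination
      (-(((p : ℚ) - 2 * x + 1) ^ 2) * (Nat.factorial (x + 2) : ℚ)
          * (Nat.factorial (p + 1 - x) : ℚ) * (Nat.choose (p + 3) (x + 2) : ℚ)) * e1
        + (-(((p : ℚ) - 2 * x + 1) ^ 2) * (Nat.factorial (p + 3) : ℚ)) * e2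
  rw [Finset.sum_congr rfl key, ← Finset.sum_div]
  -- Step 2: the main combinatorial identity
  have c1 : ∑ x ∈ Finset.range (p + 2),
      (Nat.choose (p + 2) x : ℚ) * (Nat.choose (p + 2) (x + 2) : ℚ)
        = (Nat.choose (2 * p + 4) p : ℚ) := by exact_mod_cast sumL1 p
  have c2 : ∑ x ∈ Finset.range (p + 2),
      (Nat.choose (p + 2) x : ℚ) * (Nat.choose (p + 2) (x + 1) : ℚ)
        = (Nat.choose (2 * p + 4) (p + 1) : ℚ) := by exact_mod_cast sumL2 p
  have c3 : ∑ x ∈ Finset.range (p + 2),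
      (Nat.choose (p + 2) x : ℚ) * (Nat.choose (p + 3) (x + 2) : ℚ)
        = (Nat.choose (2 * p + 5) (p + 1) : ℚ) := by exact_mod_cast sumL3 p
  have c4 : ∑ x ∈ Finset.range (p + 2),
      (Nat.choose (p + 3) x : ℚ) * (Nat.choose (p + 2) (x + 1) : ℚ)
        = (Nat.choose (2 * p + 5) (p + 1) : ℚ) := by exact_mod_cast sumL4 p
  have hpas : (Nat.choose (2 * p + 5) (p + 1) : ℚ)
      = (Nat.choose (2 * p + 4) p : ℚ) + (Nat.choose (2 * p + 4) (p + 1) : ℚ) := by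
    have := Nat.choose_succ_succ (2 * p + 4) p
    exact_mod_cast congrArg (Nat.cast : ℕ → ℚ) this
  have hrel : ((p : ℚ) + 1) * (Nat.choose (2 * p + 4) (p + 1) : ℚ)
      = ((p : ℚ) + 4) * (Nat.choose (2 * p + 4) p : ℚ) := by
    have h := Nat.choose_succ_right_eq (2 * p + 4) p
    have h' : Nat.choose (2 * p + 4) (p + 1) * (p + 1) = Nat.choose (2 * p + 4) p * (p + 4) := by
      rw [h]; congr 1; omega
    have := congrArg (Nat.cast : ℕ → ℚ) h'
    push_cast at this
    linarith [this]
  have main : ∑ x ∈ Finset.range (p + 2),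
      ((p : ℚ) - 2 * (x : ℚ) + 1) ^ 2 * (Nat.choose (p + 3) x : ℚ)
          * (Nat.choose (p + 3) (x + 2) : ℚ)
        = 2 * ((p : ℚ) + 3) * (Nat.choose (2 * p + 4) p : ℚ) := by
    have hdec : ∀ x ∈ Finset.range (p + 2),
        ((p : ℚ) - 2 * (x : ℚ) + 1) ^ 2 * (Nat.choose (p + 3) x : ℚ)
            * (Nat.choose (p + 3) (x + 2) : ℚ)
          = ((p : ℚ) + 3) ^ 2 * ((Nat.choose (p + 2) x : ℚ) * (Nat.choose (p + 2) (x + 2) : ℚ))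
            - 3 * ((p : ℚ) + 3) ^ 2
                * ((Nat.choose (p + 2) x : ℚ) * (Nat.choose (p + 2) (x + 1) : ℚ))
            + 2 * ((p : ℚ) + 3)
                * ((Nat.choose (p + 2) x : ℚ) * (Nat.choose (p + 3) (x + 2) : ℚ))
            + ((p : ℚ) + 3) * ((p : ℚ) + 5)
                * ((Nat.choose (p + 3) x : ℚ) * (Nat.choose (p + 2) (x + 1) : ℚ)) := by
      intro x _
      have h := decomp (p + 2) x
      have hidx : p + 2 + 1 = p + 3 := rfl
      rw [hidx] at h
      push_cast at h
      linear_combination h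
    rw [Finset.sum_congr rfl hdec]
    rw [Finset.sum_add_distrib, Finset.sum_add_distrib, Finset.sum_sub_distrib]
    simp only [← Finset.mul_sum]
    rw [c1, c2, c3, c4]
    linear_combination ((p : ℚ) + 3) * ((p : ℚ) + 7) * hpas - 2 * ((p : ℚ) + 3) * hrel
  rw [main]
  -- Step 3: final arithmetic with factorials
  have hfs : (Nat.factorial (p + 3) : ℚ) = ((p : ℚ) + 3) * (Nat.factorial (p + 2) : ℚ) := by
    have : Nat.factorial (p + 3) = (p + 3) * Nat.factorial (p + 2) := rfl
    exact_mod_cast congrArg (Nat.cast : ℕ → ℚ) this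
  rw [div_eq_div_iff (mul_ne_zero (fact_ne _) (fact_ne _)) (mul_ne_zero (fact_ne _) (fact_ne _))]
  rw [hfs]
  ring
end

section
/- The value 1 - ∑_{p=2}^∞ 2^p·(p-2)!/(p!·(p+1)!) equals (e^2 - 5)/4. -/
open Finset

theorem one_sub_series_eval :
    1 - ∑' n : ℕ, (2 : ℝ) ^ (n + 2) * (Nat.factorial n) /
        ((Nat.factorial (n + 2)) * (Nat.factorial (n + 3))) =
      (Real.exp 1 ^ 2 - 5) / 4 := by
  set t : ℕ → ℝ := fun n => (2 : ℝ) ^ (n + 2) * (Nat.factorial n) /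
      ((Nat.factorial (n + 2)) * (Nat.factorial (n + 3))) with ht
  set f : ℕ → ℝ := fun n => 2 ^ (n + 1) / ((n + 1) * (Nat.factorial (n + 2))) with hf
  set g : ℕ → ℝ := fun n => 2 ^ (n + 1) / (Nat.factorial (n + 3)) with hg
  have hfacpos : ∀ m : ℕ, (0 : ℝ) < (Nat.factorial m : ℝ) := fun m => by
    exact_mod_cast Nat.factorial_pos m
  -- exp series
  have hexp : HasSum (fun n : ℕ => (2 : ℝ) ^ n / Nat.factorial n) (Real.exp 2) := by
    rw [Real.exp_eq_exp_ℝ]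
    exact NormedSpace.expSeries_div_hasSum_exp (2:ℝ)
  have hshift : HasSum (fun n : ℕ => (2 : ℝ) ^ (n + 3) / Nat.factorial (n + 3))
      (Real.exp 2 - 5) := by
    have := (hasSum_nat_add_iff' (f := fun n : ℕ => (2 : ℝ) ^ n / Nat.factorial n) 3).mpr hexp
    convert this using 2
    · rfl
    simp [Finset.sum_range_succ, Nat.factorial]
    norm_num
  have hgsum : HasSum g ((Real.exp 2 - 5) / 4) := by
    have := hshift.div_const 4
    convert this using 2 with n
    · rfl
    rw [hg]
    push_cast
    ring
  -- per-term identity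
  have hterm : ∀ n : ℕ, t n = (f n - f (n + 1)) - g n := by
    intro n
    have h2 : (Nat.factorial (n + 2) : ℝ) = (n + 2) * ((n + 1) * Nat.factorial n) := by
      push_cast [Nat.factorial_succ]; ring
    have h3 : (Nat.factorial (n + 3) : ℝ) = (n + 3) * ((n + 2) * ((n + 1) * Nat.factorial n)) := by
      push_cast [Nat.factorial_succ]; ring
    have h4 : (Nat.factorial (n + 4) : ℝ) =
        (n + 4) * ((n + 3) * ((n + 2) * ((n + 1) * Nat.factorial n))) := by
      push_cast [Nat.factorial_succ]; ring
    have hn0 : (Nat.factorial n : ℝ) ≠ 0 := (hfacpos n).ne'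
    rw [ht, hf, hg]
    simp only []
    push_cast [h2, h3, h4]
    have h1 : ((n : ℝ) + 1) ≠ 0 := by positivity
    have h2' : ((n : ℝ) + 2) ≠ 0 := by positivity
    have h3' : ((n : ℝ) + 3) ≠ 0 := by positivity
    have h4' : ((n : ℝ) + 4) ≠ 0 := by positivity
    field_simp
    ring
  -- f tends to 0
  have hf0 : Filter.Tendsto f Filter.atTop (nhds 0) := by
    apply squeeze_zero (fun n => by positivity)
      (g := fun n : ℕ => (2 : ℝ) ^ (n + 3) / Nat.factorial (n + 3))
    · intro n
      rw [hf]
      have h3 : (Nat.factorial (n + 3) : ℝ) = (n + 3) * Nat.factorial (n + 2) := by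
        push_cast [Nat.factorial_succ]; ring
      rw [h3]
      rw [div_le_div_iff₀ (by positivity) (by positivity)]
      have hfp := hfacpos (n + 2)
      have hpow : (0:ℝ) < 2 ^ (n+1) := by positivity
      have h4 : (2:ℝ) ^ (n+3) = 2 ^ (n+1) * 4 := by ring
      rw [h4]
      have hk : ((n:ℝ) + 3) ≤ 4 * ((n:ℝ) + 1) := by
        have : (0:ℝ) ≤ n := Nat.cast_nonneg n
        linarith
      nlinarith [mul_le_mul_of_nonneg_right
        (mul_le_mul_of_nonneg_left hk hpow.le) hfp.le]
    · exact hshift.summable.tendsto_atTop_zero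
  -- partial sums of t
  have hpartial : ∀ N : ℕ, ∑ i ∈ range N, t i = f 0 - f N - ∑ i ∈ range N, g i := by
    intro N
    have := Finset.sum_range_sub' f N
    calc ∑ i ∈ range N, t i = ∑ i ∈ range N, ((f i - f (i + 1)) - g i) := by
          exact Finset.sum_congr rfl fun i _ => hterm i
      _ = (∑ i ∈ range N, (f i - f (i + 1))) - ∑ i ∈ range N, g i := Finset.sum_sub_distrib _ _
      _ = f 0 - f N - ∑ i ∈ range N, g i := by rw [Finset.sum_range_sub' f N]
  have htnonneg : ∀ n, 0 ≤ t n := fun n => by rw [ht]; positivity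
  have hf00 : f 0 = 1 := by norm_num [hf, Nat.factorial]
  have hsum : HasSum t (1 - (Real.exp 2 - 5) / 4) := by
    rw [hasSum_iff_tendsto_nat_of_nonneg htnonneg]
    have : Filter.Tendsto (fun N => f 0 - f N - ∑ i ∈ range N, g i) Filter.atTop
        (nhds (f 0 - 0 - (Real.exp 2 - 5) / 4)) :=
      (tendsto_const_nhds.sub hf0).sub hgsum.tendsto_sum_nat
    have h2 : ∀ N, ∑ i ∈ range N, t i = 1 - f N - ∑ i ∈ range N, g i := by
      intro N; rw [hpartial, hf00]
    rw [hf00] at this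
    simpa using this.congr fun N => (h2 N).symm
  rw [hsum.tsum_eq]
  have he : Real.exp 1 ^ 2 = Real.exp 2 := by
    rw [sq, ← Real.exp_add]; norm_num
  rw [he]; ring
end

section
/- For real p > 0 and real s > 1, the integral (1/2π)∫_{-∞}^{∞} e^{ipx}/(1+ix)^s dx equals p^{s-1} e^{-p}/Γ(s), where (1+ix)^s is defined using the principal branch of the logarithm. -/
open MeasureTheory Set Complex Real Filter Metric FourierTransform RealInnerProductSpace

lemma integrableOn_aux {s : ℝ} (hs : 0 < s) {c : ℝ} (hc : 0 < c) :
    IntegrableOn (fun t : ℝ => t ^ (s - 1) * Real.exp (-(c * t))) (Ioi 0) := by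
  have := integrableOn_rpow_mul_exp_neg_mul_rpow (p := 1) (s := s - 1) (b := c)
    (by linarith) zero_lt_one hc
  refine this.congr_fun (fun t ht => ?_) measurableSet_Ioi
  dsimp only; rw [Real.rpow_one, neg_mul]

lemma meas_aux (s : ℝ) (b : ℂ) :
    AEStronglyMeasurable
      (fun t : ℝ => (t : ℂ) ^ ((s : ℂ) - 1) * Complex.exp (-(b * t)))
      (volume.restrict (Ioi 0)) := by
  apply ContinuousOn.aestronglyMeasurable ?_ measurableSet_Ioi
  intro t ht
  refine ContinuousAt.continuousWithinAt ?_
  exact ((continuousAt_ofReal_cpow_const t _ (Or.inr (ne_of_gt ht))).mul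
    ((Complex.continuous_exp.comp (by fun_prop)).continuousAt))

lemma norm_aux {s : ℝ} {t : ℝ} (ht : 0 < t) (b : ℂ) :
    ‖(t : ℂ) ^ ((s : ℂ) - 1) * Complex.exp (-(b * t))‖
      = t ^ (s - 1) * Real.exp (-(b.re * t)) := by
  rw [norm_mul, Complex.norm_exp]
  rw [show ((t:ℂ) ^ ((s:ℂ)-1)) = (t:ℂ) ^ (((s-1 : ℝ)):ℂ) by push_cast; ring_nf]
  rw [Complex.norm_cpow_eq_rpow_re_of_pos ht, Complex.ofReal_re]
  congr 2
  simp [Complex.mul_re]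

lemma integrableOn_aux' {s : ℝ} (hs : 0 < s) {b : ℂ} (hb : 0 < b.re) :
    IntegrableOn (fun t : ℝ => (t : ℂ) ^ ((s : ℂ) - 1) * Complex.exp (-(b * t))) (Ioi 0) := by
  refine ((integrableOn_aux hs hb).mono' (meas_aux s b) ?_)
  filter_upwards [self_mem_ae_restrict measurableSet_Ioi] with t ht
  rw [norm_aux (mem_Ioi.mp ht)]

lemma gammaIntegral_complex {s : ℝ} (hs : 0 < s) {b : ℂ} (hb : 0 < b.re) :
    ∫ t : ℝ in Ioi 0, (t : ℂ) ^ ((s : ℂ) - 1) * Complex.exp (-(b * t))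
      = b ^ (-(s : ℂ)) * Complex.Gamma s := by
  set U : Set ℂ := {z : ℂ | 0 < z.re} with hU_def
  have hU : IsOpen U := isOpen_lt continuous_const Complex.continuous_re
  set F : ℂ → ℂ := fun z => ∫ t : ℝ in Ioi 0, (t : ℂ) ^ ((s : ℂ) - 1) * Complex.exp (-(z * t))
    with hF_def
  set G : ℂ → ℂ := fun z => z ^ (-(s : ℂ)) * Complex.Gamma s with hG_def
  have hFdiff : DifferentiableOn ℂ F U := by
    intro z hz
    have hzre : 0 < z.re := hz
    set ε : ℝ := z.re / 2 with hε_def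
    have hε : 0 < ε := by positivity
    have key := hasDerivAt_integral_of_dominated_loc_of_deriv_le (μ := volume.restrict (Ioi 0))
      (F := fun x (t : ℝ) => (t : ℂ) ^ ((s : ℂ) - 1) * Complex.exp (-(x * t)))
      (F' := fun x (t : ℝ) => (t : ℂ) ^ ((s : ℂ) - 1) * (Complex.exp (-(x * t)) * -(t : ℂ)))
      (bound := fun t : ℝ => t ^ ((s+1) - 1) * Real.exp (-(ε * t)))
      (x₀ := z) (Metric.ball_mem_nhds z hε)
      (Eventually.of_forall fun x => meas_aux s x)
      (integrableOn_aux' hs hzre)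
      ?_ ?_ (integrableOn_aux (by linarith) hε) ?_
    · exact (key.2.differentiableAt).differentiableWithinAt
    · -- measurability of F' z
      apply ContinuousOn.aestronglyMeasurable ?_ measurableSet_Ioi
      intro t ht
      refine ContinuousAt.continuousWithinAt ?_
      exact ((continuousAt_ofReal_cpow_const t _ (Or.inr (ne_of_gt ht))).mul
        (((Complex.continuous_exp.comp (by fun_prop)).mul (by fun_prop)).continuousAt))
    · -- bound
      filter_upwards [self_mem_ae_restrict measurableSet_Ioi] with t ht x hx
      rw [mem_Ioi] at ht
      have hxre : ε ≤ x.re := by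
        have h1 : |x.re - z.re| ≤ dist x z := by
          rw [Complex.dist_eq]
          exact Complex.abs_re_le_norm (x - z)
        have := (abs_le.mp (h1.trans (le_of_lt hx))).1
        simp only [hε_def] at *
        linarith
      have hnorm : ‖(t : ℂ) ^ ((s : ℂ) - 1) * (Complex.exp (-(x * t)) * -(t : ℂ))‖
          = t ^ (s - 1) * (Real.exp (-(x.re * t)) * t) := by
        rw [show (t : ℂ) ^ ((s : ℂ) - 1) * (Complex.exp (-(x * t)) * -(t : ℂ))
            = -((t : ℂ) ^ ((s : ℂ) - 1) * Complex.exp (-(x * t)) * (t : ℂ)) by ring,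
          norm_neg, norm_mul, norm_aux ht, Complex.norm_real, Real.norm_of_nonneg ht.le]
        ring
      rw [hnorm]
      have h1 : t ^ (s - 1) * (Real.exp (-(x.re * t)) * t)
          = t ^ ((s+1) - 1) * Real.exp (-(x.re * t)) := by
        rw [show ((s+1) - 1 : ℝ) = (s - 1) + 1 by ring, Real.rpow_add ht, Real.rpow_one]
        ring_nf

      rw [h1]
      have h2 : Real.exp (-(x.re * t)) ≤ Real.exp (-(ε * t)) := by
        apply Real.exp_le_exp.mpr
        nlinarith
      have h3 : (0:ℝ) ≤ t ^ ((s+1) - 1) := Real.rpow_nonneg ht.le _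
      nlinarith
    · -- differentiability
      filter_upwards [self_mem_ae_restrict measurableSet_Ioi] with t ht x hx
      have h1 : HasDerivAt (fun x : ℂ => -(x * t)) (-(t : ℂ)) x := by
        simpa using ((hasDerivAt_id x).mul_const (t : ℂ)).fun_neg
      exact (h1.cexp).const_mul _
  have hFan : AnalyticOnNhd ℂ F U := hFdiff.analyticOnNhd hU
  have hGan : AnalyticOnNhd ℂ G U := by
    apply DifferentiableOn.analyticOnNhd ?_ hU
    intro z hz
    refine (DifferentiableAt.cpow differentiableAt_id (differentiableAt_const _)
      ?_).mul_const _ |>.differentiableWithinAt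
    exact Complex.mem_slitPlane_iff.mpr (Or.inl hz)
  have hpre : IsPreconnected U := (convex_halfSpace_re_gt 0).isPreconnected
  have h1U : (1 : ℂ) ∈ U := by simp [hU_def]
  have hreal : ∀ x : ℝ, 0 < x → F x = G x := by
    intro x hx
    have := Complex.integral_cpow_mul_exp_neg_mul_Ioi
      (a := (s : ℂ)) (r := x) (by simpa using hs) hx
    simp only [hF_def, hG_def]
    rw [this, one_div, Complex.inv_cpow, Complex.cpow_neg]
    rw [Complex.arg_ofReal_of_nonneg hx.le]
    exact Real.pi_ne_zero.symm
  have hfreq : ∃ᶠ z in nhdsWithin (1 : ℂ) {(1:ℂ)}ᶜ, F z = G z := by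
    have htend : Tendsto (fun n : ℕ => ((1 + ((n:ℝ)+1)⁻¹ : ℝ) : ℂ)) atTop
        (nhdsWithin (1 : ℂ) {(1:ℂ)}ᶜ) := by
      apply tendsto_nhdsWithin_of_tendsto_nhds_of_eventually_within
      · have : Tendsto (fun n : ℕ => (1 + ((n:ℝ)+1)⁻¹ : ℝ)) atTop (nhds 1) := by
          simpa using (tendsto_const_nhds (x := (1:ℝ))).add tendsto_one_div_add_atTop_nhds_zero_nat
        have h2 := (Complex.continuous_ofReal.tendsto 1).comp this
        simpa [Function.comp_def] using h2
      · apply Eventually.of_forall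
        intro n
        simp only [mem_compl_iff, mem_singleton_iff]
        intro h
        have : (1 + ((n:ℝ)+1)⁻¹ : ℝ) = 1 := by exact_mod_cast h
        have hpos : (0:ℝ) < ((n:ℝ)+1)⁻¹ := by positivity
        linarith
    refine htend.frequently ((Eventually.of_forall fun n : ℕ => ?_).frequently)
    exact hreal (1 + ((n:ℝ)+1)⁻¹) (by positivity)
  exact hFan.eqOn_of_preconnected_of_frequently_eq hGan hpre h1U hfreq hb

open Complex in
theorem laplace_formula (p s : ℝ) (hp : 0 < p) (hs : 1 < s) :
    (1 / (2 * Real.pi)) * ∫ x : ℝ, Complex.exp (Complex.I * p * x) / (1 + Complex.I * x) ^ (s : ℂ) =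
      ((p ^ (s - 1) * Real.exp (-p) / Real.Gamma s : ℝ) : ℂ) := by
  have hs0 : (0:ℝ) < s := by linarith
  have hΓpos : 0 < Real.Gamma s := Real.Gamma_pos_of_pos hs0
  have hΓne : (Complex.Gamma s) ≠ 0 := by
    rw [Complex.Gamma_ofReal]
    exact_mod_cast hΓpos.ne'
  -- the function
  set f : ℝ → ℂ := Set.indicator (Ioi 0)
    (fun t : ℝ => (t : ℂ) ^ ((s:ℂ) - 1) * Complex.exp (-(t:ℂ)) / Complex.Gamma s) with hf_def
  -- integrability of f
  have hint : IntegrableOn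
      (fun t : ℝ => (t : ℂ) ^ ((s:ℂ) - 1) * Complex.exp (-(t:ℂ)) / Complex.Gamma s) (Ioi 0) := by
    simpa [IntegrableOn] using ((integrableOn_aux' hs0 (b := 1) (by simp)).div_const (Complex.Gamma s))
  have hf_int : Integrable f := (integrable_indicator_iff measurableSet_Ioi).mpr hint
  -- Fourier transform of f
  have hFT : ∀ ξ : ℝ, 𝓕 f ξ = ((1:ℂ) + (2 * Real.pi * ξ : ℝ) * Complex.I) ^ (-(s:ℂ)) := by
    intro ξ
    rw [Real.fourier_real_eq_integral_exp_smul]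
    have h1 : ∀ v : ℝ, Complex.exp (↑(-2 * Real.pi * v * ξ) * Complex.I) • f v
        = Set.indicator (Ioi 0) (fun t : ℝ =>
            (t : ℂ) ^ ((s:ℂ) - 1) *
              Complex.exp (-((1 + (2 * Real.pi * ξ : ℝ) * Complex.I) * t)) / Complex.Gamma s) v := by
      intro v
      by_cases hv : v ∈ Ioi (0:ℝ)
      · rw [hf_def, Set.indicator_of_mem hv, Set.indicator_of_mem hv, smul_eq_mul]
        rw [show Complex.exp (↑(-2 * Real.pi * v * ξ) * Complex.I) *
            ((v : ℂ) ^ ((s:ℂ) - 1) * Complex.exp (-(v:ℂ)) / Complex.Gamma s)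
          = (v : ℂ) ^ ((s:ℂ) - 1) *
            (Complex.exp (↑(-2 * Real.pi * v * ξ) * Complex.I) * Complex.exp (-(v:ℂ)))
              / Complex.Gamma s by ring, ← Complex.exp_add]
        congr 3
        push_cast
        ring
      · rw [hf_def, Set.indicator_of_notMem hv, Set.indicator_of_notMem hv, smul_zero]
    rw [integral_congr_ae (Eventually.of_forall h1), integral_indicator measurableSet_Ioi]
    have hbre : (0:ℝ) < ((1:ℂ) + (2 * Real.pi * ξ : ℝ) * Complex.I).re := by
      simp
    rw [integral_div, gammaIntegral_complex hs0 hbre, mul_div_assoc,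
      div_self hΓne, mul_one]
  -- integrability of the Fourier transform
  have h'f : Integrable (𝓕 f) := by
    have hcont : Continuous (fun ξ : ℝ => ((1:ℂ) + (2 * Real.pi * ξ : ℝ) * Complex.I) ^ (-(s:ℂ))) := by
      apply Continuous.cpow (by continuity) continuous_const
      intro ξ
      exact Complex.mem_slitPlane_iff.mpr (Or.inl (by simp))
    have hbound : ∀ ξ : ℝ,
        ‖((1:ℂ) + (2 * Real.pi * ξ : ℝ) * Complex.I) ^ (-(s:ℂ))‖
          ≤ (2:ℝ) ^ s * (1 + ‖ξ‖) ^ (-s) := by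
      intro ξ
      set b : ℂ := (1:ℂ) + (2 * Real.pi * ξ : ℝ) * Complex.I with hb_def
      have hbre : b.re = 1 := by simp [hb_def]
      have hbne : b ≠ 0 := fun h => by simp [h] at hbre
      rw [Complex.norm_cpow_of_ne_zero hbne]
      simp only [Complex.neg_re, Complex.ofReal_re, Complex.neg_im, Complex.ofReal_im, neg_zero,
        mul_zero, Real.exp_zero, div_one]
      have h2 : (1 + ‖ξ‖) / 2 ≤ ‖b‖ := by
        have i1 : (1:ℝ) ≤ ‖b‖ := by
          calc (1:ℝ) = |b.re| := by rw [hbre]; norm_num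
          _ ≤ ‖b‖ := Complex.abs_re_le_norm b
        have i2 : |ξ| ≤ ‖b‖ := by
          calc |ξ| ≤ |2 * Real.pi * ξ| := by
                rw [abs_mul]
                nlinarith [abs_nonneg ξ, Real.pi_gt_three, abs_mul 2 Real.pi,
                  abs_of_pos (show (0:ℝ) < 2 * Real.pi by positivity)]
          _ = |b.im| := by simp [hb_def]
          _ ≤ ‖b‖ := Complex.abs_im_le_norm b
        rw [Real.norm_eq_abs]
        linarith
      calc ‖b‖ ^ (-s) ≤ ((1 + ‖ξ‖) / 2) ^ (-s) :=
            Real.rpow_le_rpow_of_nonpos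
              (by rw [Real.norm_eq_abs]; positivity) h2 (by linarith)
        _ = (2:ℝ) ^ s * (1 + ‖ξ‖) ^ (-s) := by
            rw [Real.div_rpow (by rw [Real.norm_eq_abs]; positivity) (by norm_num),
              Real.rpow_neg (by norm_num : (0:ℝ) ≤ 2)]
            field_simp [Real.rpow_natCast]
    have hint2 : Integrable (fun ξ : ℝ => ((1:ℂ) + (2 * Real.pi * ξ : ℝ) * Complex.I) ^ (-(s:ℂ))) := by
      refine Integrable.mono' (((integrable_one_add_norm (E := ℝ) (r := s)
        (by simpa using hs)).const_mul ((2:ℝ) ^ s))) hcont.aestronglyMeasurable ?_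
      exact Eventually.of_forall hbound
    exact hint2.congr (Eventually.of_forall fun ξ => (hFT ξ).symm)
  -- continuity of f at p
  have hcont_p : ContinuousAt f p := by
    have hev : (fun t : ℝ => (t : ℂ) ^ ((s:ℂ) - 1) * Complex.exp (-(t:ℂ)) / Complex.Gamma s)
        =ᶠ[nhds p] f := by
      filter_upwards [Ioi_mem_nhds hp] with t ht
      rw [hf_def, Set.indicator_of_mem ht]
    refine ContinuousAt.congr ?_ hev
    exact ((continuousAt_ofReal_cpow_const p _ (Or.inr hp.ne')).mul
      ((Complex.continuous_exp.comp (by fun_prop)).continuousAt)).div_const _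
  -- Fourier inversion
  have hinv := hf_int.fourierInv_fourier_eq h'f hcont_p
  -- compute the inverse Fourier integral
  have hLHS : 𝓕⁻ (𝓕 f) p =
      (1 / (2 * Real.pi)) * ∫ x : ℝ,
        Complex.exp (Complex.I * p * x) / (1 + Complex.I * x) ^ (s : ℂ) := by
    rw [Real.fourierInv_eq' (𝓕 f) p]
    have h1 : ∀ ξ : ℝ, Complex.exp (↑(2 * Real.pi * ⟪ξ, p⟫) * Complex.I) • 𝓕 f ξ
        = (fun x : ℝ => Complex.exp (Complex.I * p * x) / (1 + Complex.I * x) ^ (s:ℂ))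
            (2 * Real.pi * ξ) := by
      intro ξ
      show _ = Complex.exp (Complex.I * ↑p * ↑(2 * Real.pi * ξ)) /
          (1 + Complex.I * ↑(2 * Real.pi * ξ)) ^ (s:ℂ)
      rw [hFT ξ, smul_eq_mul]
      have hb : ((1:ℂ) + (2 * Real.pi * ξ : ℝ) * Complex.I) = 1 + Complex.I * (2 * Real.pi * ξ : ℝ) := by
        push_cast; ring
      rw [hb, Complex.cpow_neg, div_eq_mul_inv]
      congr 1
      congr 1
      simp only [RCLike.inner_apply, conj_trivial]
      push_cast
      ring
    rw [integral_congr_ae (Eventually.of_forall h1),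
      MeasureTheory.Measure.integral_comp_mul_left
        (fun x : ℝ => Complex.exp (Complex.I * p * x) / (1 + Complex.I * x) ^ (s:ℂ)) (2 * Real.pi)]
    rw [Complex.real_smul]
    congr 1
    rw [abs_of_pos (by positivity : (0:ℝ) < (2 * Real.pi)⁻¹)]
    push_cast
    rw [one_div]
  -- conclude
  rw [← hLHS, hinv, hf_def, Set.indicator_of_mem (mem_Ioi.mpr hp)]
  rw [Complex.ofReal_div, Complex.ofReal_mul, ← Complex.Gamma_ofReal,
    Complex.ofReal_exp, Complex.ofReal_neg, Complex.ofReal_cpow hp.le]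
  push_cast
  ring
end

section
/- For each positive integer p, 2^p · ∑_{λ ⊢ p, ℓ(λ) ≤ 2} [2]_λ/([4]_λ · h_λ²) = 12·(2p+4)!·2^p / (p!·(p+2)!·(p+3)!·(p+4)!). -/
/-- The parts of a partition of `p`, sorted in decreasing order. -/
def sortedParts {p : ℕ} (P : Nat.Partition p) : List ℕ :=
  (P.parts.sort (· ≤ ·)).reverse

/-- The generalized Pochhammer symbol `[b]_λ = ∏_{i=1}^{ℓ(λ)} ∏_{j=1}^{λ_i} (b + j - i)`
(with parameter σ = 1), for a partition given as a decreasing list of parts. -/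
noncomputable def pochhammer1 (b : ℝ) (l : List ℕ) : ℝ :=
  ∏ i ∈ Finset.range l.length, ∏ j ∈ Finset.range (l.getD i 0), (b + (j : ℝ) - (i : ℝ))

/-- The product of all hook-lengths of a partition given as a decreasing list of parts:
the hook length of the box in (0-indexed) row `i`, column `j` is
`(λ_i - 1 - j) + #{i' > i : λ_{i'} > j} + 1`. -/
def hookProd (l : List ℕ) : ℕ :=
  ∏ i ∈ Finset.range l.length, ∏ j ∈ Finset.range (l.getD i 0),
    (l.getD i 0 - j + ((l.drop (i + 1)).filter (fun a => j < a)).length)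

open Finset Nat

section Aux

lemma vand_range (a b c N : ℕ) (hc : c ≤ b) (hN : a < N) :
    ∑ x ∈ Finset.range N, a.choose x * b.choose (x + c) = (a + b).choose (b - c) := by
  set k := b - c with hk
  have key : ∀ x, a.choose x * b.choose (x + c) =
      if x ∈ Finset.range (k+1) then a.choose x * b.choose (k - x) else 0 := by
    intro x
    by_cases h : x ≤ k
    · rw [if_pos (by simp; omega)]
      congr 1
      rw [← Nat.choose_symm (show x + c ≤ b by omega)]
      congr 1; omega
    · rw [if_neg (by simp; omega)]
      have hb : b < x + c := by omega
      simp [Nat.choose_eq_zero_of_lt hb]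
  calc ∑ x ∈ Finset.range N, a.choose x * b.choose (x+c)
      = ∑ x ∈ Finset.range (N + k + 1), a.choose x * b.choose (x+c) := by
        apply Finset.sum_subset (Finset.range_subset_range.2 (by omega))
        intro x _ hx
        have : a < x := by simp at hx; omega
        simp [Nat.choose_eq_zero_of_lt this]
    _ = ∑ x ∈ Finset.range (N+k+1), if x ∈ Finset.range (k+1) then a.choose x * b.choose (k-x) else 0 :=
        Finset.sum_congr rfl (fun x _ => key x)
    _ = ∑ x ∈ Finset.range (k+1), a.choose x * b.choose (k-x) := by
        rw [Finset.sum_ite_mem, Finset.inter_eq_right.2 (Finset.range_subset_range.2 (by omega))]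
    _ = (a+b).choose k := by
        rw [Nat.add_choose_eq, Finset.Nat.sum_antidiagonal_eq_sum_range_succ_mk]

lemma vand_range' (a b c N : ℕ) (hc : c ≤ b) (hN : a < N) :
    ∑ x ∈ Finset.range N, (a.choose x : ℤ) * (b.choose (x + c) : ℤ) = ((a + b).choose (b - c) : ℤ) := by
  have := congrArg (Nat.cast : ℕ → ℤ) (vand_range a b c N hc hN)
  push_cast at this
  exact this

lemma key_sum (n : ℕ) (hn : 0 < n) :
    ∑ x ∈ range (n+1), ((n:ℤ) - 2*x)^2 * (n.choose x : ℤ) * ((n+4).choose (x+2) : ℤ)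
      = (n:ℤ) * (n+4) *
        (2 * ((2*n+2).choose (n+1) : ℤ) - ((2*n+2).choose (n+2) : ℤ) - ((2*n+2).choose n : ℤ)) := by
  set A : ℕ → ℤ := fun x => ((n-1).choose x : ℤ) with hA
  set B : ℕ → ℤ := fun x => if x = 0 then 0 else ((n-1).choose (x-1) : ℤ) with hB
  set U : ℕ → ℤ := fun x => ((n+3).choose (x+2) : ℤ) with hU
  set V : ℕ → ℤ := fun x => ((n+3).choose (x+1) : ℤ) with hV
  have h2 : ∀ x ∈ range (n+1), ((n:ℤ) - 2*x) * ((n+4).choose (x+2) : ℤ) = (n+4) * (U x - V x) := by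
    intro x hx
    simp only [mem_range] at hx
    have e1 := Nat.add_one_mul_choose_eq (n+3) (x+1)
    have e2 := Nat.choose_mul_succ_eq (n+3) (x+2)
    have h34 : n + 3 + 1 = n + 4 := by omega
    have hx2 : x + 1 + 1 = x + 2 := by omega
    simp only [Nat.succ_eq_add_one, h34, hx2] at e1 e2
    have hle : x + 2 ≤ n + 4 := by omega
    zify [hle] at e1 e2
    simp only [hU, hV]
    linear_combination e1 - e2
  have h1 : ∀ x ∈ range (n+1), ((n:ℤ) - 2*x) * (n.choose x : ℤ) = (n:ℤ) * (A x - B x) := by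
    intro x hx
    simp only [mem_range] at hx
    match x with
    | 0 =>
      simp only [hA, hB, if_pos rfl]
      simp
    | y+1 =>
      have hy : y + 1 ≤ n := by omega
      have hn1 : n - 1 + 1 = n := by omega
      have f1 := Nat.add_one_mul_choose_eq (n-1) y
      have f2 := Nat.choose_mul_succ_eq (n-1) (y+1)
      have hy2 : y + 1 + 1 = y + 2 := by omega
      simp only [Nat.succ_eq_add_one, hn1, hy2] at f1 f2
      have hle : y + 1 ≤ n := hy
      zify [hle] at f1 f2
      simp only [hA, hB, if_neg (Nat.succ_ne_zero y), Nat.add_sub_cancel]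
      push_cast
      linear_combination f1 - f2
  have hpt : ∀ x ∈ range (n+1), ((n:ℤ) - 2*x)^2 * (n.choose x : ℤ) * ((n+4).choose (x+2) : ℤ)
      = (n:ℤ)*(n+4) * (A x * U x) - (n:ℤ)*(n+4) * (A x * V x)
        - (n:ℤ)*(n+4) * (B x * U x) + (n:ℤ)*(n+4) * (B x * V x) := by
    intro x hx
    have e1 := h1 x hx
    have e2 := h2 x hx
    have : (((n:ℤ) - 2*x) * (n.choose x : ℤ)) * (((n:ℤ) - 2*x) * ((n+4).choose (x+2) : ℤ))
        = ((n:ℤ) * (A x - B x)) * ((n+4) * (U x - V x)) := by rw [e1, e2]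
    linear_combination this
  rw [Finset.sum_congr rfl hpt]
  simp only [Finset.sum_add_distrib, Finset.sum_sub_distrib, ← Finset.mul_sum]
  have sAU : ∑ x ∈ range (n+1), A x * U x = ((2*n+2).choose (n+1) : ℤ) := by
    have := vand_range' (n-1) (n+3) 2 (n+1) (by omega) (by omega)
    have h1 : n - 1 + (n+3) = 2*n+2 := by omega
    have h2 : n + 3 - 2 = n + 1 := by omega
    rw [h1, h2] at this
    exact this
  have sAV : ∑ x ∈ range (n+1), A x * V x = ((2*n+2).choose (n+2) : ℤ) := by
    have := vand_range' (n-1) (n+3) 1 (n+1) (by omega) (by omega)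
    have h1 : n - 1 + (n+3) = 2*n+2 := by omega
    have h2 : n + 3 - 1 = n + 2 := by omega
    rw [h1, h2] at this
    exact this
  have sBU : ∑ x ∈ range (n+1), B x * U x = ((2*n+2).choose n : ℤ) := by
    rw [Finset.sum_range_succ']
    have e0 : B 0 * U 0 = 0 := by simp [hB]
    rw [e0, add_zero]
    have : ∀ x, B (x+1) * U (x+1) = ((n-1).choose x : ℤ) * ((n+3).choose (x+3) : ℤ) := by
      intro x
      simp only [hB, hU, if_neg (Nat.succ_ne_zero x), Nat.add_sub_cancel]
    simp only [this]
    have := vand_range' (n-1) (n+3) 3 n (by omega) (by omega)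
    have h1 : n - 1 + (n+3) = 2*n+2 := by omega
    have h2 : n + 3 - 3 = n := by omega
    rw [h1, h2] at this
    exact this
  have sBV : ∑ x ∈ range (n+1), B x * V x = ((2*n+2).choose (n+1) : ℤ) := by
    rw [Finset.sum_range_succ']
    have e0 : B 0 * V 0 = 0 := by simp [hB]
    rw [e0, add_zero]
    have : ∀ x, B (x+1) * V (x+1) = ((n-1).choose x : ℤ) * ((n+3).choose (x+2) : ℤ) := by
      intro x
      simp only [hB, hV, if_neg (Nat.succ_ne_zero x), Nat.add_sub_cancel]
    simp only [this]
    have := vand_range' (n-1) (n+3) 2 n (by omega) (by omega)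
    have h1 : n - 1 + (n+3) = 2*n+2 := by omega
    have h2 : n + 3 - 2 = n + 1 := by omega
    rw [h1, h2] at this
    exact this
  rw [sAU, sAV, sBU, sBV]
  ring

lemma prod_shift (k a : ℕ) : ∏ j ∈ range a, ((k:ℝ) + 1 + j) = (k+a)! / k ! := by
  induction a with
  | zero =>
    rw [Finset.prod_range_zero, Nat.add_zero, div_self (by positivity : (k ! : ℝ) ≠ 0)]
  | succ a ih =>
    rw [Finset.prod_range_succ, ih]
    have hk : (k ! : ℝ) ≠ 0 := by positivity
    have : ((k + (a+1))! : ℝ) = (k + a)! * (k + 1 + a) := by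
      have : k + (a+1) = (k + a) + 1 := by omega
      rw [this, Nat.factorial_succ]
      push_cast
      ring
    rw [this]
    field_simp

lemma poch_pair (b : ℝ) (a x : ℕ) :
    pochhammer1 b [a, x] = (∏ j ∈ range a, (b + j)) * ∏ j ∈ range x, (b + j - 1) := by
  simp only [pochhammer1, List.length_cons, List.length_nil]
  rw [show (0:ℕ)+1+1 = 2 from rfl, Finset.prod_range_succ, Finset.prod_range_succ,
    Finset.prod_range_zero]
  simp

lemma poch_single (b : ℝ) (a : ℕ) :
    pochhammer1 b [a] = ∏ j ∈ range a, (b + j) := by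
  simp only [pochhammer1, List.length_cons, List.length_nil]
  rw [show (0:ℕ)+1 = 1 from rfl, Finset.prod_range_succ, Finset.prod_range_zero]
  simp

lemma poch2_pair (a x : ℕ) : pochhammer1 2 [a, x] = ((a+1)! : ℝ) * (x ! : ℝ) := by
  rw [poch_pair]
  have h1 : ∏ j ∈ range a, ((2:ℝ) + j) = ∏ j ∈ range a, ((1:ℕ) + 1 + (j:ℝ)) := by
    apply Finset.prod_congr rfl; intro j _; norm_num
  have h2 : ∏ j ∈ range x, ((2:ℝ) + j - 1) = ∏ j ∈ range x, ((0:ℕ) + 1 + (j:ℝ)) := by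
    apply Finset.prod_congr rfl; intro j _; push_cast; ring
  rw [h1, h2, prod_shift, prod_shift]
  norm_num [Nat.add_comm]

lemma poch4_pair (a x : ℕ) : pochhammer1 4 [a, x] * 12 = ((a+3)! : ℝ) * ((x+2)! : ℝ) := by
  rw [poch_pair]
  have h1 : ∏ j ∈ range a, ((4:ℝ) + j) = ∏ j ∈ range a, ((3:ℕ) + 1 + (j:ℝ)) := by
    apply Finset.prod_congr rfl; intro j _; norm_num
  have h2 : ∏ j ∈ range x, ((4:ℝ) + j - 1) = ∏ j ∈ range x, ((2:ℕ) + 1 + (j:ℝ)) := by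
    apply Finset.prod_congr rfl; intro j _; push_cast; ring
  rw [h1, h2, prod_shift, prod_shift]
  have e1 : (3:ℕ) + a = a + 3 := by omega
  have e2 : (2:ℕ) + x = x + 2 := by omega
  rw [e1, e2]
  norm_num [Nat.factorial]
  ring

lemma poch2_single (a : ℕ) : pochhammer1 2 [a] = ((a+1)! : ℝ) := by
  rw [poch_single]
  have h1 : ∏ j ∈ range a, ((2:ℝ) + j) = ∏ j ∈ range a, ((1:ℕ) + 1 + (j:ℝ)) := by
    apply Finset.prod_congr rfl; intro j _; norm_num
  rw [h1, prod_shift]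
  norm_num [Nat.add_comm]

lemma poch4_single (a : ℕ) : pochhammer1 4 [a] * 6 = ((a+3)! : ℝ) := by
  rw [poch_single]
  have h1 : ∏ j ∈ range a, ((4:ℝ) + j) = ∏ j ∈ range a, ((3:ℕ) + 1 + (j:ℝ)) := by
    apply Finset.prod_congr rfl; intro j _; norm_num
  rw [h1, prod_shift]
  have e1 : (3:ℕ) + a = a + 3 := by omega
  rw [e1]
  norm_num [Nat.factorial]

lemma hook_single (a : ℕ) : hookProd [a] = a ! := by
  simp only [hookProd, List.length_cons, List.length_nil]
  rw [show (0:ℕ)+1 = 1 from rfl, Finset.prod_range_succ, Finset.prod_range_zero]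
  simp only [List.getD, one_mul]
  rw [← Nat.descFactorial_self a, Nat.descFactorial_eq_prod_range]
  apply Finset.prod_congr rfl
  intro j hj
  simp [List.drop, List.filter]

lemma hook_pair (a x : ℕ) (h : x ≤ a) :
    (a - x + 1) * hookProd [a, x] = (a+1)! * x ! := by
  have hrow1 : ∏ j ∈ range x, (x - j + (([] : List ℕ).filter (fun b => decide (j < b))).length) = x ! := by
    rw [← Nat.descFactorial_self x, Nat.descFactorial_eq_prod_range]
    apply Finset.prod_congr rfl
    intro j hj
    simp
  have p1 : ∏ j ∈ range x, (a - j + (([x] : List ℕ).filter (fun b => decide (j < b))).length)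
      = (a+1).descFactorial x := by
    rw [Nat.descFactorial_eq_prod_range]
    apply Finset.prod_congr rfl
    intro j hj
    simp only [Finset.mem_range] at hj
    have hl : (([x] : List ℕ).filter (fun b => decide (j < b))).length = 1 := by
      simp [List.filter_cons, hj]
    omega
  have p2 : ∏ j ∈ Finset.Ico x a, (a - j + (([x] : List ℕ).filter (fun b => decide (j < b))).length)
      = (a-x)! := by
    rw [Finset.prod_Ico_eq_prod_range]
    rw [← Nat.descFactorial_self (a-x), Nat.descFactorial_eq_prod_range]
    apply Finset.prod_congr rfl
    intro j hj
    have hl : (([x] : List ℕ).filter (fun b => decide (x + j < b))).length = 0 := by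
      simp [List.filter_cons]
    omega
  have hrow0 : ∏ j ∈ range a, (a - j + (([x] : List ℕ).filter (fun b => decide (j < b))).length)
      = (a+1).descFactorial x * (a-x)! := by
    have split : (∏ j ∈ Finset.Ico 0 x, (a - j + (([x] : List ℕ).filter (fun b => decide (j < b))).length))
        * ∏ j ∈ Finset.Ico x a, (a - j + (([x] : List ℕ).filter (fun b => decide (j < b))).length)
        = ∏ j ∈ Finset.Ico 0 a, (a - j + (([x] : List ℕ).filter (fun b => decide (j < b))).length) :=
      Finset.prod_Ico_consecutive _ (Nat.zero_le x) h
    simp only [← Finset.range_eq_Ico] at split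
    rw [← split, p1, p2]
  have hdef : hookProd [a, x] = ((a+1).descFactorial x * (a-x)!) * x ! := by
    simp only [hookProd, List.length_cons, List.length_nil]
    rw [show (0:ℕ)+1+1 = 2 from rfl, Finset.prod_range_succ, Finset.prod_range_succ,
      Finset.prod_range_zero, one_mul]
    have g0 : ([a, x] : List ℕ).getD 0 0 = a := rfl
    have g1 : ([a, x] : List ℕ).getD 1 0 = x := rfl
    have d1 : ([a, x] : List ℕ).drop (0+1) = [x] := rfl
    have d2 : ([a, x] : List ℕ).drop (1+1) = ([] : List ℕ) := rfl
    rw [g0, g1, d1, d2, hrow0, hrow1]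
  rw [hdef]
  have e : (a - x + 1) * ((a+1).descFactorial x * (a-x)! * x !)
      = ((a+1-x)! * (a+1).descFactorial x) * x ! := by
    have e2 : (a+1-x)! = (a-x+1) * (a-x)! := by
      rw [show a+1-x = (a-x)+1 by omega, Nat.factorial_succ]
    rw [e2]; ring
  calc (a - x + 1) * ((a+1).descFactorial x * (a-x)! * x !)
      = ((a+1-x)! * (a+1).descFactorial x) * x ! := e
    _ = (a+1)! * x ! := by rw [Nat.factorial_mul_descFactorial (by omega : x ≤ a+1)]

def twoPar (p : ℕ) (hp : 0 < p) (x : ℕ) : Nat.Partition p :=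
  if h : 0 < x ∧ x + x ≤ p then
    { parts := ↑[x, p - x]
      parts_pos := by
        intro i hi
        simp only [Multiset.mem_coe, List.mem_cons, List.mem_singleton, List.not_mem_nil,
          or_false] at hi
        rcases hi with rfl | rfl <;> omega
      parts_sum := by
        simp only [Multiset.sum_coe, List.sum_cons, List.sum_nil]
        omega }
  else
    { parts := {p}
      parts_pos := by
        intro i hi
        simp only [Multiset.mem_singleton] at hi
        omega
      parts_sum := by simp }

lemma sortedParts_of_parts {p : ℕ} (P : Nat.Partition p) (l : List ℕ)
    (hs : List.Pairwise (· ≤ ·) l) (h : P.parts = ↑l) : sortedParts P = l.reverse := by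
  unfold sortedParts
  rw [h]
  congr 1
  exact List.Perm.eq_of_pairwise'
    (Multiset.pairwise_sort _ _) hs
    (Multiset.coe_eq_coe.mp (by rw [Multiset.sort_eq]))

lemma sortedParts_twoPar_pos {p : ℕ} (hp : 0 < p) {x : ℕ} (hx : 0 < x) (h2 : x + x ≤ p) :
    sortedParts (twoPar p hp x) = [p - x, x] := by
  have : sortedParts (twoPar p hp x) = ([x, p - x] : List ℕ).reverse := by
    apply sortedParts_of_parts
    · refine List.pairwise_cons.mpr ⟨?_, List.pairwise_singleton _ _⟩
      intro b hb
      simp only [List.mem_singleton] at hb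
      omega
    · simp [twoPar, dif_pos (And.intro hx h2)]
  simpa using this

lemma sortedParts_twoPar_zero {p : ℕ} (hp : 0 < p) :
    sortedParts (twoPar p hp 0) = [p] := by
  have : sortedParts (twoPar p hp 0) = ([p] : List ℕ).reverse := by
    apply sortedParts_of_parts
    · simp
    · simp [twoPar]
  simpa using this

lemma classify {p : ℕ} (hp : 0 < p) (P : Nat.Partition p) (h2 : P.parts.card ≤ 2) :
    ∃ x, x ≤ p / 2 ∧ twoPar p hp x = P ∧ (sortedParts P).getD 1 0 = x := by
  have hcard : P.parts.card = 1 ∨ P.parts.card = 2 := by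
    have h0 : P.parts.card ≠ 0 := by
      intro h
      have hz : P.parts = 0 := Multiset.card_eq_zero.mp h
      have hs := P.parts_sum
      rw [hz] at hs
      simp at hs
      omega
    omega
  rcases hcard with h1 | h1
  · obtain ⟨a, ha⟩ := Multiset.card_eq_one.mp h1
    have hsum := P.parts_sum
    rw [ha] at hsum
    simp at hsum
    subst hsum
    refine ⟨0, by omega, ?_, ?_⟩
    · apply Nat.Partition.ext
      simp [twoPar, ha]
    · rw [sortedParts_of_parts P [a] (by simp) (by simp [ha])]
      rfl
  · obtain ⟨a, b, hab⟩ := Multiset.card_eq_two.mp h1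
    have hsum := P.parts_sum
    rw [hab] at hsum
    have hsum' : a + b = p := by simpa using hsum
    have hapos : 0 < a := P.parts_pos (by rw [hab]; simp)
    have hbpos : 0 < b := P.parts_pos (by rw [hab]; simp)
    rcases le_total a b with hle | hle
    · refine ⟨a, ?_, ?_, ?_⟩
      · omega
      · apply Nat.Partition.ext
        have : (twoPar p hp a).parts = ↑[a, p - a] := by
          simp [twoPar, dif_pos (And.intro hapos (by omega : a + a ≤ p))]
        rw [this, hab]
        have : p - a = b := by omega
        rw [this]
        rfl
      · rw [sortedParts_of_parts P [a, b] (by simp [hle]) (by rw [hab]; rfl)]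
        rfl
    · refine ⟨b, ?_, ?_, ?_⟩
      · omega
      · apply Nat.Partition.ext
        have : (twoPar p hp b).parts = ↑[b, p - b] := by
          simp [twoPar, dif_pos (And.intro hbpos (by omega : b + b ≤ p))]
        rw [this, hab]
        have : p - b = a := by omega
        rw [this]
        exact Multiset.cons_swap b a 0
      · rw [sortedParts_of_parts P [b, a] (by simp [hle]) (by rw [hab]; exact (Multiset.cons_swap a b 0))]
        rfl

lemma sum_two_partitions (p : ℕ) (hp : 0 < p) (f : List ℕ → ℝ) :
    ∑ P ∈ Finset.univ.filter (fun P : Nat.Partition p => P.parts.card ≤ 2), f (sortedParts P)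
      = ∑ x ∈ range (p/2 + 1), f (sortedParts (twoPar p hp x)) := by
  apply Finset.sum_nbij' (i := fun P => (sortedParts P).getD 1 0) (j := twoPar p hp)
  · intro P hP
    simp only [Finset.mem_filter, Finset.mem_univ, true_and] at hP
    obtain ⟨x, hx, -, hget⟩ := classify hp P hP
    rw [hget]
    simp only [Finset.mem_range]
    omega
  · intro x hx
    simp only [Finset.mem_range] at hx
    simp only [Finset.mem_filter, Finset.mem_univ, true_and]
    by_cases h : 0 < x
    · have : (twoPar p hp x).parts = ↑[x, p - x] := by
        simp [twoPar, dif_pos (And.intro h (by omega : x + x ≤ p))]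
      rw [this]
      rfl
    · have hx0 : x = 0 := by omega
      subst hx0
      have : (twoPar p hp 0).parts = {p} := by simp [twoPar]
      rw [this]
      simp
  · intro P hP
    simp only [Finset.mem_filter, Finset.mem_univ, true_and] at hP
    obtain ⟨x, hx, heq, hget⟩ := classify hp P hP
    rw [hget, heq]
  · intro x hx
    simp only [Finset.mem_range] at hx
    by_cases h : 0 < x
    · rw [sortedParts_twoPar_pos hp h (by omega)]
      rfl
    · have hx0 : x = 0 := by omega
      subst hx0
      rw [sortedParts_twoPar_zero hp]
      rfl
  · intro P hP
    simp only [Finset.mem_filter, Finset.mem_univ, true_and] at hP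
    obtain ⟨x, hx, heq, hget⟩ := classify hp P hP
    rw [hget, ← heq]

noncomputable def tt (p x : ℕ) : ℝ :=
  12 * ((p:ℝ) + 1 - 2*x)^2 / ((x ! : ℝ) * ((x+2)! : ℝ) * (((p+1-x)!) : ℝ) * (((p+3-x)!) : ℝ))

lemma term_eval (p x : ℕ) (hp : 0 < p) (hx : x ≤ p / 2) :
    pochhammer1 2 (sortedParts (twoPar p hp x)) /
      (pochhammer1 4 (sortedParts (twoPar p hp x)) * ((hookProd (sortedParts (twoPar p hp x)) : ℝ)) ^ 2)
    = tt p x := by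
  have h2x : x + x ≤ p := by omega
  unfold tt
  by_cases hxp : 0 < x
  · rw [sortedParts_twoPar_pos hp hxp h2x]
    have e1 : p + 1 - x = (p - x) + 1 := by omega
    have e3 : p + 3 - x = (p - x) + 3 := by omega
    rw [e1, e3]
    set a := p - x with ha
    have hxa : x ≤ a := by omega
    rw [poch2_pair]
    have h4 := poch4_pair a x
    have hH := hook_pair a x hxa
    have hHr : ((a - x + 1 : ℕ) : ℝ) * (hookProd [a, x] : ℝ) = ((a+1)! : ℝ) * (x ! : ℝ) := by
      exact_mod_cast congrArg (fun m : ℕ => (m : ℝ)) hH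
    have hD : ((a - x + 1 : ℕ) : ℝ) = (p:ℝ) + 1 - 2*x := by
      have h1 : a - x + 1 + 2*x = p + 1 := by omega
      have h2 := congrArg (fun m : ℕ => (m : ℝ)) h1
      push_cast at h2
      push_cast
      linarith
    have hP4 : pochhammer1 4 [a, x] = ((a+3)! : ℝ) * ((x+2)! : ℝ) / 12 := by
      linarith [h4]
    have hA1 : ((a+1)! : ℝ) ≠ 0 := Nat.cast_ne_zero.mpr (Nat.factorial_ne_zero _)
    have hA3 : ((a+3)! : ℝ) ≠ 0 := Nat.cast_ne_zero.mpr (Nat.factorial_ne_zero _)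
    have hX1 : ((x)! : ℝ) ≠ 0 := Nat.cast_ne_zero.mpr (Nat.factorial_ne_zero _)
    have hX2 : ((x+2)! : ℝ) ≠ 0 := Nat.cast_ne_zero.mpr (Nat.factorial_ne_zero _)
    have hDne : ((a - x + 1 : ℕ) : ℝ) ≠ 0 := Nat.cast_ne_zero.mpr (by omega)
    have hNne : (p:ℝ) + 1 - 2*(x:ℝ) ≠ 0 := by rw [← hD]; exact hDne
    have key : (hookProd [a, x] : ℝ) * ((p:ℝ) + 1 - 2*(x:ℝ)) = ((a+1)! : ℝ) * (x ! : ℝ) := by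
      rw [← hD]
      linear_combination hHr
    have hHval : (hookProd [a, x] : ℝ) = ((a+1)! : ℝ) * (x ! : ℝ) / ((p:ℝ) + 1 - 2*(x:ℝ)) :=
      (eq_div_iff hNne).mpr key
    rw [hP4, hHval]
    field_simp
  · have hx0 : x = 0 := by omega
    subst hx0
    rw [sortedParts_twoPar_zero hp, poch2_single, hook_single]
    have h4 := poch4_single p
    have hP4 : pochhammer1 4 [p] = ((p+3)! : ℝ) / 6 := by linarith
    rw [hP4]
    have hfact : ((p+1)! : ℝ) = ((p:ℝ)+1) * (p ! : ℝ) := by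
      rw [show p+1 = p.succ from rfl, Nat.factorial_succ]
      push_cast
      ring
    have e1 : p + 1 - 0 = p + 1 := by omega
    have e3 : p + 3 - 0 = p + 3 := by omega
    rw [e1, e3]
    have hA3 : ((p+3)! : ℝ) ≠ 0 := Nat.cast_ne_zero.mpr (Nat.factorial_ne_zero _)
    have hP : ((p)! : ℝ) ≠ 0 := Nat.cast_ne_zero.mpr (Nat.factorial_ne_zero _)
    have hP1 : ((p+1)! : ℝ) ≠ 0 := Nat.cast_ne_zero.mpr (Nat.factorial_ne_zero _)
    rw [hfact]
    push_cast
    field_simp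
    ring

lemma tt_symm (p x : ℕ) (hx : x ≤ p + 1) : tt p x = tt p (p+1-x) := by
  unfold tt
  have e1 : p + 1 - (p+1-x) = x := by omega
  have e2 : p + 3 - (p+1-x) = x + 2 := by omega
  have e3 : (p+1-x) + 2 = p + 3 - x := by omega
  rw [e1, e2, e3]
  have hc : ((p+1-x : ℕ) : ℝ) = (p:ℝ) + 1 - x := by
    rw [Nat.cast_sub hx]
    push_cast
    ring
  rw [hc]
  have hnum : ((p:ℝ) + 1 - 2*((p:ℝ) + 1 - x))^2 = ((p:ℝ) + 1 - 2*x)^2 := by ring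
  rw [hnum]
  ring

lemma sum_half (p : ℕ) : ∑ x ∈ range (p+2), tt p x = 2 * ∑ x ∈ range (p/2+1), tt p x := by
  have hsplit : (∑ x ∈ Finset.Ico 0 (p/2+1), tt p x) + ∑ x ∈ Finset.Ico (p/2+1) (p+2), tt p x
      = ∑ x ∈ Finset.Ico 0 (p+2), tt p x :=
    Finset.sum_Ico_consecutive _ (by omega) (by omega)
  simp only [← Finset.range_eq_Ico] at hsplit
  have hIco : ∑ x ∈ Finset.Ico (p/2+1) (p+2), tt p x = ∑ y ∈ range (p+1-p/2), tt p y := by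
    apply Finset.sum_nbij' (i := fun x => p+1-x) (j := fun y => p+1-y)
    · intro x hx; simp only [Finset.mem_Ico, Finset.mem_range] at *; omega
    · intro y hy; simp only [Finset.mem_Ico, Finset.mem_range] at *; omega
    · intro x hx; simp only [Finset.mem_Ico] at hx; omega
    · intro y hy; simp only [Finset.mem_range] at hy; omega
    · intro x hx
      simp only [Finset.mem_Ico] at hx
      exact tt_symm p x (by omega)
  rcases Nat.mod_two_eq_zero_or_one p with hpar | hpar
  · have he : p+1-p/2 = p/2+1 := by omega
    rw [he] at hIco
    rw [← hsplit, hIco]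
    ring
  · have he : p+1-p/2 = (p/2+1)+1 := by omega
    rw [he, Finset.sum_range_succ] at hIco
    have hz : tt p (p/2+1) = 0 := by
      unfold tt
      have h2 : 2*(p/2+1) = p+1 := by omega
      have : (p:ℝ) + 1 - 2*((p/2+1 : ℕ) : ℝ) = 0 := by
        have hc := congrArg (fun m : ℕ => (m : ℝ)) h2
        push_cast at hc
        push_cast
        linarith
      rw [this]
      simp
    rw [hz, add_zero] at hIco
    rw [← hsplit, hIco]
    ring

lemma sum_full (p : ℕ) (hp : 0 < p) :
    ∑ x ∈ range (p+2), tt p x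
      = 2 * (12 * (((2*p+4)!) : ℝ) / ((p ! : ℝ) * (((p+2)!) : ℝ) * (((p+3)!) : ℝ) * (((p+4)!) : ℝ))) := by
  have hP1 : ((p+1)! : ℝ) ≠ 0 := Nat.cast_ne_zero.mpr (Nat.factorial_ne_zero _)
  have hP5 : ((p+5)! : ℝ) ≠ 0 := Nat.cast_ne_zero.mpr (Nat.factorial_ne_zero _)
  have hpt : ∀ x ∈ range (p+2), tt p x
      = (12 / (((p+1)! : ℝ) * ((p+5)! : ℝ))) *
        (((p:ℝ) + 1 - 2*x)^2 * (((p+1).choose x : ℕ) : ℝ) * (((p+5).choose (x+2) : ℕ) : ℝ)) := by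
    intro x hx
    simp only [Finset.mem_range] at hx
    unfold tt
    rw [Nat.cast_choose ℝ (by omega : x ≤ p+1), Nat.cast_choose ℝ (by omega : x+2 ≤ p+5)]
    have e2 : p+5-(x+2) = p+3-x := by omega
    rw [e2]
    have h1 : ((x)! : ℝ) ≠ 0 := Nat.cast_ne_zero.mpr (Nat.factorial_ne_zero _)
    have h2 : ((x+2)! : ℝ) ≠ 0 := Nat.cast_ne_zero.mpr (Nat.factorial_ne_zero _)
    have h3 : (((p+1-x)!) : ℝ) ≠ 0 := Nat.cast_ne_zero.mpr (Nat.factorial_ne_zero _)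
    have h4 : (((p+3-x)!) : ℝ) ≠ 0 := Nat.cast_ne_zero.mpr (Nat.factorial_ne_zero _)
    field_simp
  rw [Finset.sum_congr rfl hpt, ← Finset.mul_sum]
  have hZ := key_sum (p+1) (by omega)
  have e1 : p+1+4 = p+5 := by omega
  have e2 : 2*(p+1)+2 = 2*p+4 := by omega
  have e3 : p+1+1 = p+2 := by omega
  have e4 : p+1+2 = p+3 := by omega
  rw [e1, e2, e3, e4] at hZ
  have hcast : ∑ x ∈ range (p+2), (((p:ℝ) + 1 - 2*x)^2 * (((p+1).choose x : ℕ) : ℝ) * (((p+5).choose (x+2) : ℕ) : ℝ))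
      = ((p:ℝ)+1) * ((p:ℝ)+5) *
        (2*(((2*p+4).choose (p+2) : ℕ) : ℝ) - (((2*p+4).choose (p+3) : ℕ) : ℝ) - (((2*p+4).choose (p+1) : ℕ) : ℝ)) := by
    have hc := congrArg (fun z : ℤ => (z : ℝ)) hZ
    push_cast at hc
    convert hc using 1
    ring
  rw [hcast]
  have c1 : (((2*p+4).choose (p+2) : ℕ) : ℝ) = ((2*p+4)! : ℝ) / (((p+2)! : ℝ) * ((p+2)! : ℝ)) := by
    rw [Nat.cast_choose ℝ (by omega : p+2 ≤ 2*p+4)]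
    have : 2*p+4-(p+2) = p+2 := by omega
    rw [this]
  have c2 : (((2*p+4).choose (p+3) : ℕ) : ℝ) = ((2*p+4)! : ℝ) / (((p+3)! : ℝ) * ((p+1)! : ℝ)) := by
    rw [Nat.cast_choose ℝ (by omega : p+3 ≤ 2*p+4)]
    have : 2*p+4-(p+3) = p+1 := by omega
    rw [this]
  have c3 : (((2*p+4).choose (p+1) : ℕ) : ℝ) = ((2*p+4)! : ℝ) / (((p+1)! : ℝ) * ((p+3)! : ℝ)) := by
    rw [Nat.cast_choose ℝ (by omega : p+1 ≤ 2*p+4)]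
    have : 2*p+4-(p+1) = p+3 := by omega
    rw [this]
  rw [c1, c2, c3]
  have F1 : ((p+1)! : ℝ) = ((p:ℝ)+1) * (p ! : ℝ) := by
    rw [show p+1 = p.succ from rfl, Nat.factorial_succ]; push_cast; ring
  have F2 : ((p+2)! : ℝ) = ((p:ℝ)+2) * ((p+1)! : ℝ) := by
    rw [show p+2 = (p+1).succ from rfl, Nat.factorial_succ]; push_cast; ring
  have F3 : ((p+3)! : ℝ) = ((p:ℝ)+3) * ((p+2)! : ℝ) := by
    rw [show p+3 = (p+2).succ from rfl, Nat.factorial_succ]; push_cast; ring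
  have F4 : ((p+4)! : ℝ) = ((p:ℝ)+4) * ((p+3)! : ℝ) := by
    rw [show p+4 = (p+3).succ from rfl, Nat.factorial_succ]; push_cast; ring
  have F5 : ((p+5)! : ℝ) = ((p:ℝ)+5) * ((p+4)! : ℝ) := by
    rw [show p+5 = (p+4).succ from rfl, Nat.factorial_succ]; push_cast; ring
  rw [F5, F4, F3, F2, F1]
  have hP : ((p)! : ℝ) ≠ 0 := Nat.cast_ne_zero.mpr (Nat.factorial_ne_zero _)
  have g1 : (p:ℝ) + 1 ≠ 0 := by positivity
  have g2 : (p:ℝ) + 2 ≠ 0 := by positivity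
  have g3 : (p:ℝ) + 3 ≠ 0 := by positivity
  have g4 : (p:ℝ) + 4 ≠ 0 := by positivity
  have g5 : (p:ℝ) + 5 ≠ 0 := by positivity
  field_simp
  ring

end Aux

theorem curlyC_two_eval (p : ℕ) (hp : 0 < p) :
    (2 : ℝ) ^ p * ∑ P ∈ Finset.univ.filter (fun P : Nat.Partition p => P.parts.card ≤ 2),
        pochhammer1 2 (sortedParts P) /
          (pochhammer1 4 (sortedParts P) * ((hookProd (sortedParts P) : ℝ)) ^ 2) =
      12 * (Nat.factorial (2 * p + 4) : ℝ) * 2 ^ p /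
        ((Nat.factorial p : ℝ) * (Nat.factorial (p + 2)) * (Nat.factorial (p + 3)) *
          (Nat.factorial (p + 4))) := by
  have hstep1 := sum_two_partitions p hp
    (fun l => pochhammer1 2 l / (pochhammer1 4 l * ((hookProd l : ℝ)) ^ 2))
  rw [hstep1]
  have hstep2 : ∑ x ∈ range (p/2 + 1),
      pochhammer1 2 (sortedParts (twoPar p hp x)) /
        (pochhammer1 4 (sortedParts (twoPar p hp x)) * ((hookProd (sortedParts (twoPar p hp x)) : ℝ)) ^ 2)
      = ∑ x ∈ range (p/2 + 1), tt p x := by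
    apply Finset.sum_congr rfl
    intro x hx
    simp only [Finset.mem_range] at hx
    exact term_eval p x hp (by omega)
  rw [hstep2]
  have h1 := sum_half p
  have h2 := sum_full p hp
  have hS : ∑ x ∈ range (p/2+1), tt p x
      = 12 * (((2*p+4)!) : ℝ) / ((p ! : ℝ) * (((p+2)!) : ℝ) * (((p+3)!) : ℝ) * (((p+4)!) : ℝ)) := by
    linarith
  rw [hS]
  ring
end
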